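/- Let s > 0, K > 0, B > 0. Suppose m : [l_a, u_a] → ℝ is differentiable with 0 < m'(a) ≤ K, g is differentiable with g'(u_a) = 0 and g'(l_a) < 0, and λ ≥ sK / (-g'(l_a)). Suppose θ + m(a) ∈ (0, π/2] for all a ∈ [l_a, u_a]. Define L(a) = log(1 + B·e^{-s·cos(θ + m(a))}) + λ·g(a). Then L'(u_a) > 0 and L'(l_a) < 0 (in particular, with strict convexity of L, the minimizer lies in the open interval). -/

import Mathlib

open Real Set

theorem stmt4 (la ua s K B lam θ : ℝ) (m m' g g' : ℝ → ℝ)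
    (hla : 0 < la) (hlu : la < ua) (hs : 0 < s) (hK : 0 < K) (hB : 0 < B)
    (hm : ∀ a, HasDerivAt m (m' a) a)
    (hm' : ∀ a ∈ Icc la ua, 0 < m' a ∧ m' a ≤ K)
    (hg : ∀ a, HasDerivAt g (g' a) a)
    (hgu : g' ua = 0) (hgl : g' la < 0)
    (hlam : lam ≥ s * K / (-g' la))
    (hrange : ∀ a ∈ Icc la ua, θ + m a ∈ Ioc 0 (π / 2))
    (L : ℝ → ℝ)
    (hL : L = fun a => Real.log (1 + B * Real.exp (-(s * Real.cos (θ + m a)))) + lam * g a) :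
    0 < deriv L ua ∧ deriv L la < 0 := by
  -- derivative formula
  have key : ∀ a : ℝ,
      deriv L a = B * (Real.exp (-(s * Real.cos (θ + m a))) * (s * Real.sin (θ + m a) * m' a))
        / (1 + B * Real.exp (-(s * Real.cos (θ + m a)))) + lam * g' a := by
    intro a
    have h1 : HasDerivAt (fun a => θ + m a) (m' a) a := (hm a).const_add θ
    have h2 : HasDerivAt (fun a => Real.cos (θ + m a)) (-Real.sin (θ + m a) * m' a) a :=
      by have := (Real.hasDerivAt_cos (θ + m a)).comp a h1; exact this
    have h3 : HasDerivAt (fun a => -(s * Real.cos (θ + m a)))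
        (s * Real.sin (θ + m a) * m' a) a := by
      have := (h2.const_mul s).neg
      exact this.congr_deriv (by ring)
    have h4 : HasDerivAt (fun a => Real.exp (-(s * Real.cos (θ + m a))))
        (Real.exp (-(s * Real.cos (θ + m a))) * (s * Real.sin (θ + m a) * m' a)) a := h3.exp
    have h5 : HasDerivAt (fun a => 1 + B * Real.exp (-(s * Real.cos (θ + m a))))
        (B * (Real.exp (-(s * Real.cos (θ + m a))) * (s * Real.sin (θ + m a) * m' a))) a :=
      (h4.const_mul B).const_add 1
    have hpos : (0:ℝ) < 1 + B * Real.exp (-(s * Real.cos (θ + m a))) := by positivity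
    have h6 := h5.log (ne_of_gt hpos)
    have h7 := h6.add ((hg a).const_mul lam)
    rw [hL]
    exact h7.deriv
  have sla := hm' la ⟨le_refl la, le_of_lt hlu⟩
  have sua := hm' ua ⟨le_of_lt hlu, le_refl ua⟩
  have rla := hrange la ⟨le_refl la, le_of_lt hlu⟩
  have rua := hrange ua ⟨le_of_lt hlu, le_refl ua⟩
  have sinla : 0 < Real.sin (θ + m la) :=
    Real.sin_pos_of_pos_of_lt_pi rla.1 (lt_of_le_of_lt rla.2 (by linarith [Real.pi_pos]))
  have sinua : 0 < Real.sin (θ + m ua) :=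
    Real.sin_pos_of_pos_of_lt_pi rua.1 (lt_of_le_of_lt rua.2 (by linarith [Real.pi_pos]))
  constructor
  · rw [key ua, hgu]
    have hE : (0:ℝ) < Real.exp (-(s * Real.cos (θ + m ua))) := Real.exp_pos _
    have hD : (0:ℝ) < 1 + B * Real.exp (-(s * Real.cos (θ + m ua))) := by positivity
    have : 0 < B * (Real.exp (-(s * Real.cos (θ + m ua))) * (s * Real.sin (θ + m ua) * m' ua)) := by
      have := sua.1; positivity
    have := div_pos this hD
    linarith
  · rw [key la]
    set E := Real.exp (-(s * Real.cos (θ + m la))) with hEdef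
    have hE : (0:ℝ) < E := Real.exp_pos _
    have hD : (0:ℝ) < 1 + B * E := by positivity
    -- first term < s * K
    have hterm : B * (E * (s * Real.sin (θ + m la) * m' la)) / (1 + B * E) < s * K := by
      rw [div_lt_iff₀ hD]
      have hsin1 : Real.sin (θ + m la) ≤ 1 := Real.sin_le_one _
      have h1 : B * (E * (s * Real.sin (θ + m la) * m' la)) ≤ s * K * (B * E) := by
        have : s * Real.sin (θ + m la) * m' la ≤ s * K := by
          have h2 : s * Real.sin (θ + m la) * m' la ≤ s * 1 * m' la := by
            nlinarith [mul_nonneg (mul_nonneg hs.le sla.1.le) (by linarith : (0:ℝ) ≤ 1 - Real.sin (θ + m la))]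
          nlinarith [sla.2, sla.1]
        nlinarith [mul_pos hB hE]
      nlinarith [mul_pos hs hK, mul_pos hB hE]
    have hlam2 : lam * g' la ≤ -(s * K) := by
      have hg0 : 0 < -g' la := by linarith
      have := (div_le_iff₀ hg0).mp hlam
      nlinarith
    linarith
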